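/- Let n ≥ 3 and let α ∈ ℂ with |α|² = 2. Let A be the n×n Hermitian matrix with A_{1,2} = α, A_{2,1} = conj(α), A_{j,j+1} = A_{j+1,j} = 1 for 2 ≤ j ≤ n−1, A_{n,n} = 1, and all other entries 0. Then every eigenvalue of A lies in the half-open interval (−2, 2]; in particular the span of A is less than 4. -/

import Mathlib

open Complex Finset Matrix

private lemma re_conj_mul_swap (z w : ℂ) :
    ((starRingEnd ℂ) z * w).re = ((starRingEnd ℂ) w * z).re := by
  simp [Complex.mul_re, Complex.conj_re, Complex.conj_im]
  ring

private lemma aux_bounds (m : ℕ) (α : ℂ) (hα2 : Complex.normSq α = 2) (x : ℕ → ℂ)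
    (hS : ∑ j ∈ range (m + 3), Complex.normSq (x j) = 1)
    (Q : ℂ)
    (hQ : Q = (starRingEnd ℂ) (x 0) * (α * x 1)
        + (starRingEnd ℂ) (x 1) * ((starRingEnd ℂ) α * x 0 + x 2)
        + (∑ j ∈ range m, (starRingEnd ℂ) (x (j + 2)) * (x (j + 1) + x (j + 3)))
        + (starRingEnd ℂ) (x (m + 2)) * (x (m + 1) + x (m + 2))) :
    -2 < Q.re ∧ Q.re ≤ 2 := by
  have hαne : (starRingEnd ℂ) α ≠ 0 := by
    simp only [ne_eq, map_eq_zero]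
    intro h; rw [h] at hα2; simp [Complex.normSq] at hα2
  set f : ℕ → ℝ := fun j => Complex.normSq (x j) with hfdef
  set a : ℕ → ℝ := fun j => ((starRingEnd ℂ) (x j) * x (j + 1)).re with hadef
  set r0 : ℝ := ((starRingEnd ℂ) (x 1) * ((starRingEnd ℂ) α * x 0)).re with hr0def
  -- Q.re in closed form
  have hQre : Q.re = 2 * r0 + 2 * (∑ j ∈ range (m + 1), a (j + 1)) + f (m + 2) := by
    have hmid : ∑ j ∈ range m, ((starRingEnd ℂ) (x (j + 2)) * (x (j + 1) + x (j + 3))).re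
        = ∑ j ∈ range m, (a (j + 1) + a (j + 2)) := by
      refine Finset.sum_congr rfl fun j _ => ?_
      rw [mul_add, Complex.add_re, re_conj_mul_swap (x (j + 2)) (x (j + 1))]
    have hs1 : ∑ j ∈ range (m + 1), a (j + 1) = (∑ j ∈ range m, a (j + 1)) + a (m + 1) :=
      Finset.sum_range_succ _ m
    have hs2 : ∑ j ∈ range (m + 1), a (j + 1) = (∑ j ∈ range m, a (j + 2)) + a 1 :=
      Finset.sum_range_succ' (fun j => a (j + 1)) m
    have h0 : ((starRingEnd ℂ) (x 0) * (α * x 1)).re = r0 := by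
      rw [hr0def]
      simp only [Complex.mul_re, Complex.mul_im, Complex.conj_re, Complex.conj_im]
      ring
    have h1 : ((starRingEnd ℂ) (x 1) * ((starRingEnd ℂ) α * x 0 + x 2)).re = r0 + a 1 := by
      rw [mul_add, Complex.add_re]
    have hlast : ((starRingEnd ℂ) (x (m + 2)) * (x (m + 1) + x (m + 2))).re
        = a (m + 1) + f (m + 2) := by
      rw [mul_add, Complex.add_re, re_conj_mul_swap (x (m + 2)) (x (m + 1))]
      have : ((starRingEnd ℂ) (x (m + 2)) * x (m + 2)).re = f (m + 2) := by
        simp only [Complex.mul_re, Complex.conj_re, Complex.conj_im]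
        show _ = Complex.normSq (x (m + 2))
        rw [Complex.normSq_apply]
        ring
      rw [this]
    rw [hQ, Complex.add_re, Complex.add_re, Complex.add_re, Complex.re_sum, hmid,
      Finset.sum_add_distrib, h0, h1, hlast]
    linarith
  -- shift identities for f
  have hf1 : ∑ j ∈ range (m + 2), f j = (∑ j ∈ range (m + 1), f (j + 1)) + f 0 :=
    Finset.sum_range_succ' f (m + 1)
  have hf2 : ∑ j ∈ range (m + 3), f j = (∑ j ∈ range (m + 2), f (j + 1)) + f 0 :=
    Finset.sum_range_succ' f (m + 2)
  have hf3 : ∑ j ∈ range (m + 2), f (j + 1) = (∑ j ∈ range (m + 1), f (j + 2)) + f 1 :=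
    Finset.sum_range_succ' (fun j => f (j + 1)) (m + 1)
  have hf4 : ∑ j ∈ range (m + 3), f j = (∑ j ∈ range (m + 2), f j) + f (m + 2) :=
    Finset.sum_range_succ f (m + 2)
  have hSf : ∑ j ∈ range (m + 3), f j = 1 := hS
  -- squared norms of the special vectors
  have hnsqα : Complex.normSq ((starRingEnd ℂ) α * x 0) = 2 * f 0 := by
    rw [_root_.map_mul, Complex.normSq_conj, hα2]
  have hre1 : (x 1 * (starRingEnd ℂ) ((starRingEnd ℂ) α * x 0)).re = r0 := by
    rw [hr0def]
    simp only [_root_.map_mul, Complex.mul_re, Complex.mul_im, Complex.conj_re,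
      Complex.conj_im, RingHomCompTriple.comp_apply, Complex.conj_conj, RingHom.id_apply]
    ring
  have hrepair : ∀ j : ℕ, (x (j + 1) * (starRingEnd ℂ) (x (j + 2))).re = a (j + 1) := by
    intro j
    rw [hadef]
    simp only [Complex.mul_re, Complex.conj_re, Complex.conj_im]
    ring
  -- identity I1 : 2 - Q.re is a sum of squares
  have hI1 : 2 - Q.re = Complex.normSq (x 1 - (starRingEnd ℂ) α * x 0)
      + ∑ j ∈ range (m + 1), Complex.normSq (x (j + 1) - x (j + 2)) := by
    have e1 : Complex.normSq (x 1 - (starRingEnd ℂ) α * x 0) = f 1 + 2 * f 0 - 2 * r0 := by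
      rw [Complex.normSq_sub, hnsqα, hre1]
    have e2 : ∑ j ∈ range (m + 1), Complex.normSq (x (j + 1) - x (j + 2))
        = (∑ j ∈ range (m + 1), f (j + 1)) + (∑ j ∈ range (m + 1), f (j + 2))
          - 2 * ∑ j ∈ range (m + 1), a (j + 1) := by
      have step : ∀ j ∈ range (m + 1), Complex.normSq (x (j + 1) - x (j + 2))
          = f (j + 1) + f (j + 2) - 2 * a (j + 1) := by
        intro j _
        rw [Complex.normSq_sub, hrepair j]
      rw [Finset.sum_congr rfl step, Finset.sum_sub_distrib, Finset.sum_add_distrib,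
        ← Finset.mul_sum]
    linarith
  -- identity I2 : 2 + Q.re is a positive combination of squares
  have hI2 : 2 + Q.re = Complex.normSq (x 1 + (starRingEnd ℂ) α * x 0)
      + (∑ j ∈ range (m + 1), Complex.normSq (x (j + 1) + x (j + 2)))
      + 2 * f (m + 2) := by
    have e1 : Complex.normSq (x 1 + (starRingEnd ℂ) α * x 0) = f 1 + 2 * f 0 + 2 * r0 := by
      rw [Complex.normSq_add, hnsqα, hre1]
    have e2 : ∑ j ∈ range (m + 1), Complex.normSq (x (j + 1) + x (j + 2))
        = (∑ j ∈ range (m + 1), f (j + 1)) + (∑ j ∈ range (m + 1), f (j + 2))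
          + 2 * ∑ j ∈ range (m + 1), a (j + 1) := by
      have step : ∀ j ∈ range (m + 1), Complex.normSq (x (j + 1) + x (j + 2))
          = f (j + 1) + f (j + 2) + 2 * a (j + 1) := by
        intro j _
        rw [Complex.normSq_add, hrepair j]
      rw [Finset.sum_congr rfl step, Finset.sum_add_distrib, Finset.sum_add_distrib,
        ← Finset.mul_sum]
    linarith
  constructor
  · -- lower bound, strict
    by_contra hcon
    push_neg at hcon
    have hsumnn : (0:ℝ) ≤ ∑ j ∈ range (m + 1), Complex.normSq (x (j + 1) + x (j + 2)) :=
      Finset.sum_nonneg fun j _ => Complex.normSq_nonneg _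
    have hA0 : Complex.normSq (x 1 + (starRingEnd ℂ) α * x 0) = 0 := by
      have := Complex.normSq_nonneg (x 1 + (starRingEnd ℂ) α * x 0)
      have := Complex.normSq_nonneg (x (m + 2))
      have hfm : f (m + 2) = Complex.normSq (x (m + 2)) := rfl
      linarith
    have hB0 : ∑ j ∈ range (m + 1), Complex.normSq (x (j + 1) + x (j + 2)) = 0 := by
      have := Complex.normSq_nonneg (x 1 + (starRingEnd ℂ) α * x 0)
      have := Complex.normSq_nonneg (x (m + 2))
      have hfm : f (m + 2) = Complex.normSq (x (m + 2)) := rfl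
      linarith
    have hC0 : x (m + 2) = 0 := by
      have := Complex.normSq_nonneg (x 1 + (starRingEnd ℂ) α * x 0)
      have hfm : f (m + 2) = Complex.normSq (x (m + 2)) := rfl
      have : Complex.normSq (x (m + 2)) = 0 := by linarith [Complex.normSq_nonneg (x (m+2))]
      exact Complex.normSq_eq_zero.mp this
    have hpair : ∀ j < m + 1, x (j + 1) + x (j + 2) = 0 := by
      intro j hj
      have := (Finset.sum_eq_zero_iff_of_nonneg
        (fun j _ => Complex.normSq_nonneg (x (j + 1) + x (j + 2)))).mp hB0 j
        (Finset.mem_range.mpr hj)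
      exact Complex.normSq_eq_zero.mp this
    -- descending chain : x (m+2-k) = 0 for k ≤ m+1
    have hzero : ∀ k, k ≤ m + 1 → x (m + 2 - k) = 0 := by
      intro k
      induction k with
      | zero => intro _; simpa using hC0
      | succ k ih =>
        intro hk
        have h1 := ih (by omega)
        have hp := hpair (m - k) (by omega)
        have e1 : m - k + 2 = m + 2 - k := by omega
        have e2 : m - k + 1 = m + 2 - (k + 1) := by omega
        rw [e1, h1, add_zero, e2] at hp
        exact hp
    have hx1 : x 1 = 0 := by
      have := hzero (m + 1) le_rfl
      simpa using this
    have hx0 : x 0 = 0 := by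
      have h := Complex.normSq_eq_zero.mp hA0
      rw [hx1, zero_add] at h
      rcases mul_eq_zero.mp h with h' | h'
      · exact absurd h' hαne
      · exact h'
    have hall : ∀ j ∈ range (m + 3), f j = 0 := by
      intro j hj
      simp only [Finset.mem_range] at hj
      have hxj : x j = 0 := by
        rcases Nat.eq_zero_or_pos j with h | h
        · rw [h]; exact hx0
        · have hk : j = m + 2 - (m + 2 - j) := by omega
          rw [hk]
          exact hzero (m + 2 - j) (by omega)
      show Complex.normSq (x j) = 0
      rw [hxj]; simp
    rw [Finset.sum_eq_zero hall] at hSf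
    norm_num at hSf
  · -- upper bound
    have h1 : (0:ℝ) ≤ Complex.normSq (x 1 - (starRingEnd ℂ) α * x 0) :=
      Complex.normSq_nonneg _
    have h2 : (0:ℝ) ≤ ∑ j ∈ range (m + 1), Complex.normSq (x (j + 1) - x (j + 2)) :=
      Finset.sum_nonneg fun j _ => Complex.normSq_nonneg _
    linarith

/-- the template 𝒫ₙ (path with first edge-weight α, |α|² = 2, remaining
edge-weights 1, and charge +1 on the last vertex) has all eigenvalues in (-2, 2];
in particular it has span less than 4. -/
theorem stmt_6 (n : ℕ) (hn : 3 ≤ n) (α : ℂ) (hα : ‖α‖ ^ 2 = 2)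
    (A : Matrix (Fin n) (Fin n) ℂ)
    (hAdef : ∀ i j : Fin n, A i j =
      if (i : ℕ) = 0 ∧ (j : ℕ) = 1 then α
      else if (i : ℕ) = 1 ∧ (j : ℕ) = 0 then starRingEnd ℂ α
      else if 1 ≤ (i : ℕ) ∧ (j : ℕ) = (i : ℕ) + 1 then 1
      else if 1 ≤ (j : ℕ) ∧ (i : ℕ) = (j : ℕ) + 1 then 1
      else if (i : ℕ) = n - 1 ∧ (j : ℕ) = n - 1 then 1
      else 0)
    (hA : A.IsHermitian) :
    (∀ i, hA.eigenvalues i ∈ Set.Ioc (-2 : ℝ) 2) ∧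
    (∀ i j, hA.eigenvalues i - hA.eigenvalues j < 4) := by
  obtain ⟨m, rfl⟩ : ∃ m, n = m + 3 := ⟨n - 3, by omega⟩
  have hα2 : Complex.normSq α = 2 := by rw [← Complex.sq_norm]; exact_mod_cast hα
  have key : ∀ i, hA.eigenvalues i ∈ Set.Ioc (-2 : ℝ) 2 := by
    intro i0
    set lam := hA.eigenvalues i0 with hlam
    set v : Fin (m + 3) → ℂ := ⇑(hA.eigenvectorBasis i0) with hvdef
    have hev : A *ᵥ v = lam • v := hA.mulVec_eigenvectorBasis i0
    set x : ℕ → ℂ := fun j => if h : j < m + 3 then v ⟨j, h⟩ else 0 with hxdef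
    have hx : ∀ j : Fin (m + 3), v j = x (j : ℕ) := by
      intro j
      simp only [hxdef]
      rw [dif_pos j.isLt, Fin.eta]
    have hmv : ∀ i : Fin (m + 3), (A *ᵥ v) i = ∑ j ∈ range (m + 3),
        ((if (i : ℕ) = 0 ∧ j = 1 then α
          else if (i : ℕ) = 1 ∧ j = 0 then starRingEnd ℂ α
          else if 1 ≤ (i : ℕ) ∧ j = (i : ℕ) + 1 then 1
          else if 1 ≤ j ∧ (i : ℕ) = j + 1 then 1
          else if (i : ℕ) = m + 3 - 1 ∧ j = m + 3 - 1 then 1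
          else 0) * x j) := by
      intro i
      have h0 : (A *ᵥ v) i = ∑ j : Fin (m + 3), A i j * v j := rfl
      rw [h0, ← Fin.sum_univ_eq_sum_range]
      exact Finset.sum_congr rfl fun j _ => by rw [hAdef, hx]
    have hrow : ∀ i : Fin (m + 3), (A *ᵥ v) i =
        (if (i : ℕ) = 0 then α * x 1
         else if (i : ℕ) = 1 then starRingEnd ℂ α * x 0 + x 2
         else if (i : ℕ) = m + 2 then x (m + 1) + x (m + 2)
         else x ((i : ℕ) - 1) + x ((i : ℕ) + 1)) := by
      intro i
      have hi : (i : ℕ) < m + 3 := i.isLt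
      rw [hmv i]
      by_cases hi0 : (i : ℕ) = 0
      · rw [if_pos hi0]
        have hpt : ∀ j ∈ range (m + 3),
            ((if (i : ℕ) = 0 ∧ j = 1 then α
              else if (i : ℕ) = 1 ∧ j = 0 then starRingEnd ℂ α
              else if 1 ≤ (i : ℕ) ∧ j = (i : ℕ) + 1 then 1
              else if 1 ≤ j ∧ (i : ℕ) = j + 1 then 1
              else if (i : ℕ) = m + 3 - 1 ∧ j = m + 3 - 1 then 1
              else 0) * x j) = (if j = 1 then α * x 1 else 0) := by
          intro j hj
          simp only [Finset.mem_range] at hj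
          by_cases hj1 : j = 1
          · subst hj1
            rw [if_pos ⟨hi0, rfl⟩, if_pos rfl]
          · rw [if_neg (by omega), if_neg (by omega), if_neg (by omega), if_neg (by omega),
              if_neg (by omega), if_neg hj1, zero_mul]
        rw [Finset.sum_congr rfl hpt, Finset.sum_ite_eq' (range (m + 3)) 1 (fun _ => α * x 1),
          if_pos (Finset.mem_range.mpr (by omega))]
      · rw [if_neg hi0]
        by_cases hi1 : (i : ℕ) = 1
        · rw [if_pos hi1]
          have hpt : ∀ j ∈ range (m + 3),
              ((if (i : ℕ) = 0 ∧ j = 1 then α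
                else if (i : ℕ) = 1 ∧ j = 0 then starRingEnd ℂ α
                else if 1 ≤ (i : ℕ) ∧ j = (i : ℕ) + 1 then 1
                else if 1 ≤ j ∧ (i : ℕ) = j + 1 then 1
                else if (i : ℕ) = m + 3 - 1 ∧ j = m + 3 - 1 then 1
                else 0) * x j) =
              ((if j = 0 then starRingEnd ℂ α * x 0 else 0) + (if j = 2 then x 2 else 0)) := by
            intro j hj
            simp only [Finset.mem_range] at hj
            by_cases hj0 : j = 0
            · subst hj0
              rw [if_neg (by omega), if_pos ⟨hi1, rfl⟩, if_pos rfl, if_neg (by omega), add_zero]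
            · by_cases hj2 : j = 2
              · subst hj2
                rw [if_neg (by omega), if_neg (by omega), if_pos ⟨by omega, by omega⟩, one_mul,
                  if_neg hj0, if_pos rfl, zero_add]
              · rw [if_neg (by omega), if_neg (by omega), if_neg (by omega), if_neg (by omega),
                  if_neg (by omega), zero_mul, if_neg hj0, if_neg hj2, add_zero]
          rw [Finset.sum_congr rfl hpt, Finset.sum_add_distrib,
            Finset.sum_ite_eq' (range (m + 3)) 0 (fun _ => starRingEnd ℂ α * x 0),
            Finset.sum_ite_eq' (range (m + 3)) 2 (fun _ => x 2),
            if_pos (Finset.mem_range.mpr (by omega)), if_pos (Finset.mem_range.mpr (by omega))]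
        · rw [if_neg hi1]
          by_cases him : (i : ℕ) = m + 2
          · rw [if_pos him]
            have hpt : ∀ j ∈ range (m + 3),
                ((if (i : ℕ) = 0 ∧ j = 1 then α
                  else if (i : ℕ) = 1 ∧ j = 0 then starRingEnd ℂ α
                  else if 1 ≤ (i : ℕ) ∧ j = (i : ℕ) + 1 then 1
                  else if 1 ≤ j ∧ (i : ℕ) = j + 1 then 1
                  else if (i : ℕ) = m + 3 - 1 ∧ j = m + 3 - 1 then 1
                  else 0) * x j) =
                ((if j = m + 1 then x (m + 1) else 0) + (if j = m + 2 then x (m + 2) else 0)) := by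
              intro j hj
              simp only [Finset.mem_range] at hj
              by_cases hj1 : j = m + 1
              · subst hj1
                rw [if_neg (by omega), if_neg (by omega), if_neg (by omega),
                  if_pos ⟨by omega, by omega⟩, one_mul, if_pos rfl, if_neg (by omega), add_zero]
              · by_cases hj2 : j = m + 2
                · subst hj2
                  rw [if_neg (by omega), if_neg (by omega), if_neg (by omega), if_neg (by omega),
                    if_pos ⟨by omega, by omega⟩, one_mul, if_neg hj1, if_pos rfl, zero_add]
                · rw [if_neg (by omega), if_neg (by omega), if_neg (by omega), if_neg (by omega),
                    if_neg (by omega), zero_mul, if_neg hj1, if_neg hj2, add_zero]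
            rw [Finset.sum_congr rfl hpt, Finset.sum_add_distrib,
              Finset.sum_ite_eq' (range (m + 3)) (m + 1) (fun _ => x (m + 1)),
              Finset.sum_ite_eq' (range (m + 3)) (m + 2) (fun _ => x (m + 2)),
              if_pos (Finset.mem_range.mpr (by omega)), if_pos (Finset.mem_range.mpr (by omega))]
          · rw [if_neg him]
            have hpt : ∀ j ∈ range (m + 3),
                ((if (i : ℕ) = 0 ∧ j = 1 then α
                  else if (i : ℕ) = 1 ∧ j = 0 then starRingEnd ℂ α
                  else if 1 ≤ (i : ℕ) ∧ j = (i : ℕ) + 1 then 1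
                  else if 1 ≤ j ∧ (i : ℕ) = j + 1 then 1
                  else if (i : ℕ) = m + 3 - 1 ∧ j = m + 3 - 1 then 1
                  else 0) * x j) =
                ((if j = (i : ℕ) - 1 then x ((i : ℕ) - 1) else 0)
                  + (if j = (i : ℕ) + 1 then x ((i : ℕ) + 1) else 0)) := by
              intro j hj
              simp only [Finset.mem_range] at hj
              by_cases hjm : j = (i : ℕ) - 1
              · rw [if_neg (by omega), if_neg (by omega), if_neg (by omega),
                  if_pos (by omega : 1 ≤ j ∧ (i : ℕ) = j + 1), one_mul,
                  if_pos hjm, if_neg (by omega), add_zero, hjm]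
              · by_cases hjp : j = (i : ℕ) + 1
                · rw [if_neg (by omega), if_neg (by omega),
                    if_pos (by omega : 1 ≤ (i : ℕ) ∧ j = (i : ℕ) + 1), one_mul,
                    if_neg hjm, if_pos hjp, zero_add, hjp]
                · rw [if_neg (by omega), if_neg (by omega), if_neg (by omega), if_neg (by omega),
                    if_neg (by omega), zero_mul, if_neg hjm, if_neg hjp, add_zero]
            rw [Finset.sum_congr rfl hpt, Finset.sum_add_distrib,
              Finset.sum_ite_eq' (range (m + 3)) ((i : ℕ) - 1) (fun _ => x ((i : ℕ) - 1)),
              Finset.sum_ite_eq' (range (m + 3)) ((i : ℕ) + 1) (fun _ => x ((i : ℕ) + 1)),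
              if_pos (Finset.mem_range.mpr (by omega)), if_pos (Finset.mem_range.mpr (by omega))]
    -- norm of the eigenvector
    have hnorm : ‖hA.eigenvectorBasis i0‖ = 1 := hA.eigenvectorBasis.orthonormal.1 i0
    have hsum2 : ∑ i : Fin (m + 3), ‖v i‖ ^ 2 = 1 := by
      rw [EuclideanSpace.norm_eq] at hnorm
      exact Real.sqrt_eq_one.mp hnorm
    have hSfin : ∑ i : Fin (m + 3), Complex.normSq (v i) = 1 := by
      rw [← hsum2]
      exact Finset.sum_congr rfl fun i _ => by
        rw [Complex.sq_norm]
    have hS : ∑ j ∈ range (m + 3), Complex.normSq (x j) = 1 := by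
      rw [← Fin.sum_univ_eq_sum_range (fun j => Complex.normSq (x j)) (m + 3), ← hSfin]
      exact Finset.sum_congr rfl fun i _ => by rw [hx i]
    set Q : ℂ := ∑ i : Fin (m + 3), starRingEnd ℂ (v i) * (A *ᵥ v) i with hQdef
    have hQlam : Q = (lam : ℂ) := by
      rw [hQdef, hev]
      have hpt : ∀ i : Fin (m + 3), starRingEnd ℂ (v i) * (lam • v) i
          = (lam : ℂ) * ((Complex.normSq (v i) : ℝ) : ℂ) := by
        intro i
        rw [Pi.smul_apply, Complex.real_smul, Complex.normSq_eq_conj_mul_self]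
        ring
      rw [Finset.sum_congr rfl fun i _ => hpt i, ← Finset.mul_sum, ← Complex.ofReal_sum, hSfin]
      norm_num
    have hQsum : Q = starRingEnd ℂ (x 0) * (α * x 1)
        + starRingEnd ℂ (x 1) * (starRingEnd ℂ α * x 0 + x 2)
        + (∑ j ∈ range m, starRingEnd ℂ (x (j + 2)) * (x (j + 1) + x (j + 3)))
        + starRingEnd ℂ (x (m + 2)) * (x (m + 1) + x (m + 2)) := by
      have h1 : Q = ∑ i ∈ range (m + 3), (starRingEnd ℂ (x i) *
          (if i = 0 then α * x 1
           else if i = 1 then starRingEnd ℂ α * x 0 + x 2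
           else if i = m + 2 then x (m + 1) + x (m + 2)
           else x (i - 1) + x (i + 1))) := by
        rw [hQdef, ← Fin.sum_univ_eq_sum_range]
        refine Finset.sum_congr rfl fun i _ => ?_
        rw [hrow i, hx i]
      rw [h1, Finset.sum_range_succ' _ (m + 2), Finset.sum_range_succ' _ (m + 1),
        Finset.sum_range_succ]
      have hmid : ∀ j ∈ range m, (starRingEnd ℂ (x (j + 1 + 1)) *
          (if j + 1 + 1 = 0 then α * x 1
           else if j + 1 + 1 = 1 then starRingEnd ℂ α * x 0 + x 2
           else if j + 1 + 1 = m + 2 then x (m + 1) + x (m + 2)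
           else x (j + 1 + 1 - 1) + x (j + 1 + 1 + 1)))
          = starRingEnd ℂ (x (j + 2)) * (x (j + 1) + x (j + 3)) := by
        intro j hj
        simp only [Finset.mem_range] at hj
        rw [if_neg (by omega), if_neg (by omega), if_neg (by omega),
          show j + 1 + 1 - 1 = j + 1 from by omega, show j + 1 + 1 + 1 = j + 3 from by omega,
          show j + 1 + 1 = j + 2 from by omega]
      rw [Finset.sum_congr rfl hmid]
      norm_num
      ring
    obtain ⟨hlow, hhigh⟩ := aux_bounds m α hα2 x hS Q hQsum
    have hre : Q.re = lam := by rw [hQlam, Complex.ofReal_re]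
    rw [hre] at hlow hhigh
    exact ⟨hlow, hhigh⟩
  refine ⟨key, fun i j => ?_⟩
  have h1 := key i
  have h2 := key j
  simp only [Set.mem_Ioc] at h1 h2
  linarith [h1.1, h1.2, h2.1, h2.2]
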